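/- Let P ⊆ ℝ^d be a nonempty polytope whose support function f_P is computed by a monotone rank-2 maxout network of size s. Then xc(P) ≤ 2s. In other words, xc(P) ≤ 2·mnnc(P), where mnnc(P) is the minimum size of a monotone rank-2 maxout network computing f_P. -/

import Mathlib

open Finset Pointwise

def IsPolytope {d : ℕ} (P : Set (Fin d → ℝ)) : Prop :=
  ∃ V : Finset (Fin d → ℝ), V.Nonempty ∧ P = convexHull ℝ (V : Set (Fin d → ℝ))

noncomputable def suppFn {d : ℕ} (P : Set (Fin d → ℝ)) (c : Fin d → ℝ) : ℝ :=
  sSup ((fun x => ∑ m, c m * x m) '' P)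

def HasExtFormOfSize {d : ℕ} (P : Set (Fin d → ℝ)) (m : ℕ) : Prop :=
  ∃ (e m' : ℕ) (A : Matrix (Fin m) (Fin e) ℝ) (b : Fin m → ℝ)
    (C : Matrix (Fin m') (Fin e) ℝ) (d' : Fin m' → ℝ)
    (π : (Fin e → ℝ) →ᵃ[ℝ] (Fin d → ℝ)),
    π '' {y | A.mulVec y ≤ b ∧ C.mulVec y = d'} = P

noncomputable def xc {d : ℕ} (P : Set (Fin d → ℝ)) : ℕ :=
  sInf {m | HasExtFormOfSize P m}

def MaxoutComputes {d : ℕ} (k s : ℕ) (a : Fin s → Fin k → Fin d → ℝ)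
    (w : Fin s → Fin k → Fin s → ℝ) (f : (Fin d → ℝ) → ℝ) : Prop :=
  ∃ (z : Fin s → (Fin d → ℝ) → ℝ) (hs : 0 < s),
    (∀ j x, IsGreatest (Set.range fun i : Fin k =>
        ∑ m, a j i m * x m +
        ∑ l ∈ Finset.univ.filter (fun l => l < j), w j i l * z l x) (z j x)) ∧
    f = z ⟨s - 1, Nat.sub_lt hs Nat.one_pos⟩

def IsMaxoutNetwork {d : ℕ} (k s : ℕ) (f : (Fin d → ℝ) → ℝ) : Prop :=
  ∃ (a : Fin s → Fin k → Fin d → ℝ) (w : Fin s → Fin k → Fin s → ℝ),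
    MaxoutComputes k s a w f

def IsMonotoneMaxoutNetwork {d : ℕ} (k s : ℕ) (f : (Fin d → ℝ) → ℝ) : Prop :=
  ∃ (a : Fin s → Fin k → Fin d → ℝ) (w : Fin s → Fin k → Fin s → ℝ),
    (∀ j i m, 0 ≤ a j i m) ∧ (∀ j i l, 0 ≤ w j i l) ∧ MaxoutComputes k s a w f

def epiSet {d : ℕ} (f : (Fin d → ℝ) → ℝ) : Set (Fin (d + 1) → ℝ) :=
  {p | f (fun m => p m.castSucc) ≤ p (Fin.last d)}

def argmaxSet {d : ℕ} (c : Fin d → ℝ) (S : Set (Fin d → ℝ)) : Set (Fin d → ℝ) :=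
  {x | x ∈ S ∧ ∀ y ∈ S, ∑ m, c m * y m ≤ ∑ m, c m * x m}

def iterFaces {d : ℕ} (c : Fin d → Fin d → ℝ) (S : Set (Fin d → ℝ)) : ℕ → Set (Fin d → ℝ)
  | 0 => S
  | i + 1 => if h : i < d then argmaxSet (c ⟨i, h⟩) (iterFaces c S i) else iterFaces c S i

noncomputable def vxc {d : ℕ} (P : Set (Fin d → ℝ)) : ℕ :=
  sInf {m | ∃ Q R : Set (Fin d → ℝ), IsPolytope Q ∧ IsPolytope R ∧ P + Q = R ∧ m = xc Q + xc R}

def coneGen {d : ℕ} (S : Set (Fin d → ℝ)) : Set (Fin d → ℝ) :=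
  ⋂₀ {K | S ⊆ K ∧ Convex ℝ K ∧ ∀ x ∈ K, ∀ t : ℝ, 0 < t → t • x ∈ K}

def polarCone {d : ℕ} (K : Set (Fin d → ℝ)) : Set (Fin d → ℝ) :=
  {z | ∀ y ∈ K, ∑ i, z i * y i ≤ 0}


def muAux (s : ℕ) (g : Fin s → Fin s → ℝ) (j : Fin s) : ℝ :=
  (if (j : ℕ) = s - 1 then 1 else 0) +
  ∑ j' ∈ (Finset.univ.filter (fun j' => j < j')).attach,
    muAux s g j'.1 * g j'.1 j
termination_by s - (j : ℕ)
decreasing_by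
  have h1 : (j : ℕ) < (j'.1 : ℕ) := (Finset.mem_filter.mp j'.2).2
  have h2 := j'.1.isLt
  omega

lemma muAux_eq (s : ℕ) (g : Fin s → Fin s → ℝ) (j : Fin s) :
    muAux s g j = (if (j : ℕ) = s - 1 then 1 else 0) +
      ∑ j' ∈ Finset.univ.filter (fun j' => j < j'), muAux s g j' * g j' j := by
  rw [muAux]
  congr 1
  exact Finset.sum_attach _ (fun j' => muAux s g j' * g j' j)

lemma muAux_nonneg (s : ℕ) (g : Fin s → Fin s → ℝ) (hg : ∀ a b, 0 ≤ g a b) (j : Fin s) :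
    0 ≤ muAux s g j := by
  suffices h : ∀ n : ℕ, ∀ j : Fin s, s - (j : ℕ) ≤ n → 0 ≤ muAux s g j from
    h s j (by omega)
  intro n
  induction n with
  | zero => intro j h; have := j.isLt; omega
  | succ n ih =>
    intro j h
    rw [muAux_eq]
    refine add_nonneg (by split <;> norm_num) (Finset.sum_nonneg fun j' hj' => ?_)
    have h1 : (j : ℕ) < (j' : ℕ) := (Finset.mem_filter.mp hj').2
    exact mul_nonneg (ih j' (by omega)) (hg _ _)

lemma tele {s : ℕ} (hs : 0 < s) (Y : Fin s → Fin 2 → ℝ) (w : Fin s → Fin 2 → Fin s → ℝ)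
    (φ : Fin s → ℝ)
    (hcon : ∀ j : Fin s, ∑ i, Y j i =
      (if (j : ℕ) = s - 1 then 1 else 0) +
      ∑ j' ∈ Finset.univ.filter (fun j' => j < j'), ∑ i, Y j' i * w j' i j) :
    ∑ j, ∑ i, Y j i * (φ j - ∑ l ∈ Finset.univ.filter (fun l => l < j), w j i l * φ l)
      = φ ⟨s - 1, Nat.sub_lt hs Nat.one_pos⟩ := by
  have swap : ∀ F : Fin s → Fin s → ℝ,
      ∑ j, ∑ l ∈ Finset.univ.filter (fun l => l < j), F j l
        = ∑ l, ∑ j ∈ Finset.univ.filter (fun j => l < j), F j l := by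
    intro F
    simp only [Finset.sum_filter]
    exact Finset.sum_comm
  have step1 : ∑ j, ∑ i, Y j i * (φ j - ∑ l ∈ Finset.univ.filter (fun l => l < j), w j i l * φ l)
      = ∑ j, (∑ i, Y j i) * φ j
        - ∑ j, ∑ l ∈ Finset.univ.filter (fun l => l < j), (∑ i, Y j i * w j i l) * φ l := by
    rw [← Finset.sum_sub_distrib]
    refine Finset.sum_congr rfl fun j _ => ?_
    simp only [mul_sub, Finset.sum_sub_distrib, Finset.mul_sum, Finset.sum_mul]
    congr 1
    rw [Finset.sum_comm]
    exact Finset.sum_congr rfl fun l _ => Finset.sum_congr rfl fun i _ => by ring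
  rw [step1, swap]
  have h2 : ∑ l, ∑ j ∈ Finset.univ.filter (fun j => l < j), (∑ i, Y j i * w j i l) * φ l
      = ∑ l, (∑ j ∈ Finset.univ.filter (fun j => l < j), ∑ i, Y j i * w j i l) * φ l :=
    Finset.sum_congr rfl fun l _ => (Finset.sum_mul _ _ _).symm
  have h3 : ∑ j, (∑ i, Y j i) * φ j
      = ∑ j : Fin s, (if ↑j = s - 1 then (1:ℝ) else 0) * φ j
        + ∑ j : Fin s, (∑ j' ∈ Finset.univ.filter (fun j' => j < j'), ∑ i, Y j' i * w j' i j) * φ j := by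
    rw [← Finset.sum_add_distrib]
    exact Finset.sum_congr rfl fun j _ => by rw [hcon j, add_mul]
  rw [h2, h3]
  have h4 : ∑ j : Fin s, (if ↑j = s - 1 then (1:ℝ) else 0) * φ j
      = φ ⟨s - 1, Nat.sub_lt hs Nat.one_pos⟩ := by
    have hiff : ∀ j : Fin s, (↑j = s - 1) = (j = ⟨s - 1, Nat.sub_lt hs Nat.one_pos⟩) := by
      intro j; rw [Fin.ext_iff]
    simp only [hiff]
    simp [Finset.sum_ite_eq']
  rw [h4]
  ring

lemma mem_of_forall_exists_le {d : ℕ} {K : Set (Fin d → ℝ)} (hK : Convex ℝ K)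
    (hcl : IsClosed K) (x : Fin d → ℝ)
    (h : ∀ c : Fin d → ℝ, ∃ u ∈ K, ∑ m, c m * x m ≤ ∑ m, c m * u m) : x ∈ K := by
  by_contra hx
  obtain ⟨f, u, hfa, hux⟩ := geometric_hahn_banach_closed_point hK hcl hx
  have hf : ∀ y : Fin d → ℝ, f y = ∑ m, f (Pi.single m 1) * y m := by
    intro y
    conv_lhs => rw [pi_eq_sum_univ y]
    rw [map_sum]
    refine Finset.sum_congr rfl fun m _ => ?_
    rw [map_smul, smul_eq_mul, mul_comm]
    congr 1
    congr 1
    funext n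
    simp [Pi.single_apply, eq_comm]
  obtain ⟨v, hvK, hv⟩ := h (fun m => f (Pi.single m 1))
  have h1 : f x ≤ f v := by rw [hf x, hf v]; exact hv
  have h2 := hfa v hvK
  linarith

section Main

variable {d s : ℕ} (a : Fin s → Fin 2 → Fin d → ℝ) (w : Fin s → Fin 2 → Fin s → ℝ)

/-- the dual feasible set -/
def Sset (w : Fin s → Fin 2 → Fin s → ℝ) : Set (Fin s → Fin 2 → ℝ) :=
  {Y | (∀ j i, 0 ≤ Y j i) ∧ ∀ j : Fin s, ∑ i, Y j i =
    (if ↑j = s - 1 then 1 else 0) +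
    ∑ j' ∈ Finset.univ.filter (fun j' => j < j'), ∑ i, Y j' i * w j' i j}

noncomputable def rhoMap (a : Fin s → Fin 2 → Fin d → ℝ) :
    (Fin s → Fin 2 → ℝ) →ₗ[ℝ] (Fin d → ℝ) where
  toFun := fun Y m => ∑ j, ∑ i, Y j i * a j i m
  map_add' := by
    intro Y1 Y2; funext m
    simp [add_mul, Finset.sum_add_distrib]
  map_smul' := by
    intro r Y; funext m
    simp only [Pi.smul_apply, smul_eq_mul, RingHom.id_apply, Finset.mul_sum]
    exact Finset.sum_congr rfl fun j _ => Finset.sum_congr rfl fun i _ => by ring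

lemma rho_inner (Y : Fin s → Fin 2 → ℝ) (c : Fin d → ℝ) :
    ∑ m, c m * rhoMap a Y m = ∑ j, ∑ i, Y j i * (∑ m, a j i m * c m) := by
  simp only [rhoMap, LinearMap.coe_mk, AddHom.coe_mk, Finset.mul_sum]
  rw [Finset.sum_comm]
  refine Finset.sum_congr rfl fun j _ => ?_
  rw [Finset.sum_comm]
  exact Finset.sum_congr rfl fun i _ => Finset.sum_congr rfl fun m _ => by ring

lemma Sset_convex : Convex ℝ (Sset w) := by
  intro Y1 h1 Y2 h2 t1 t2 ht1 ht2 hsum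
  constructor
  · intro j i
    have : (t1 • Y1 + t2 • Y2) j i = t1 * Y1 j i + t2 * Y2 j i := rfl
    rw [this]
    exact add_nonneg (mul_nonneg ht1 (h1.1 j i)) (mul_nonneg ht2 (h2.1 j i))
  · intro j
    have e1 : ∀ j' i, (t1 • Y1 + t2 • Y2) j' i = t1 * Y1 j' i + t2 * Y2 j' i := fun _ _ => rfl
    simp only [e1, add_mul, Finset.sum_add_distrib]
    rw [← Finset.mul_sum, ← Finset.mul_sum, h1.2 j, h2.2 j]
    have : ∀ j' ∈ Finset.univ.filter (fun j' => j < j'),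
        (∑ i, (t1 * Y1 j' i) * w j' i j) = t1 * ∑ i, Y1 j' i * w j' i j := by
      intro j' _; rw [Finset.mul_sum]; exact Finset.sum_congr rfl fun i _ => by ring
    have h2' : ∀ j' ∈ Finset.univ.filter (fun j' => j < j'),
        (∑ i, (t2 * Y2 j' i) * w j' i j) = t2 * ∑ i, Y2 j' i * w j' i j := by
      intro j' _; rw [Finset.mul_sum]; exact Finset.sum_congr rfl fun i _ => by ring
    rw [Finset.sum_congr rfl this, Finset.sum_congr rfl h2', ← Finset.mul_sum, ← Finset.mul_sum]
    split <;> nlinarith [hsum]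

lemma Sset_closed : IsClosed (Sset w) := by
  have : Sset w = (⋂ j : Fin s, ⋂ i : Fin 2, {Y : Fin s → Fin 2 → ℝ | 0 ≤ Y j i}) ∩
      ⋂ j : Fin s, {Y : Fin s → Fin 2 → ℝ | ∑ i, Y j i =
        (if ↑j = s - 1 then 1 else 0) +
        ∑ j' ∈ Finset.univ.filter (fun j' => j < j'), ∑ i, Y j' i * w j' i j} := by
    ext Y
    simp only [Sset, Set.mem_inter_iff, Set.mem_iInter, Set.mem_setOf_eq]
  rw [this]
  have hev : ∀ (j : Fin s) (i : Fin 2), Continuous fun Y : Fin s → Fin 2 → ℝ => Y j i :=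
    fun j i => (continuous_apply i).comp (continuous_apply j)
  refine IsClosed.inter (isClosed_iInter fun j => isClosed_iInter fun i =>
      isClosed_le continuous_const (hev j i)) (isClosed_iInter fun j => ?_)
  refine isClosed_eq (continuous_finset_sum _ fun i _ => hev j i) ?_
  exact continuous_const.add (continuous_finset_sum _ fun j' _ =>
    continuous_finset_sum _ fun i _ => (hev j' i).mul continuous_const)

lemma Sset_bound (hw : ∀ j i l, 0 ≤ w j i l) :
    ∀ n : ℕ, ∀ Y ∈ Sset w, ∀ j : Fin s, s - 1 - (j : ℕ) ≤ n → ∀ i,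
      Y j i ≤ (1 + ∑ j', ∑ i', ∑ l, w j' i' l) ^ n := by
  set W : ℝ := ∑ j', ∑ i', ∑ l, w j' i' l with hWdef
  have hW0 : 0 ≤ W := Finset.sum_nonneg fun _ _ => Finset.sum_nonneg fun _ _ =>
    Finset.sum_nonneg fun _ _ => hw _ _ _
  have hpow : ∀ n : ℕ, (1:ℝ) ≤ (1 + W) ^ n := fun n => one_le_pow₀ (by linarith)
  have hWpart : ∀ j : Fin s, (∑ j' ∈ Finset.univ.filter (fun j' => j < j'), ∑ i, w j' i j) ≤ W := by
    intro j
    calc (∑ j' ∈ Finset.univ.filter (fun j' => j < j'), ∑ i, w j' i j)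
        ≤ ∑ j' : Fin s, ∑ i, w j' i j := by
          refine Finset.sum_le_sum_of_subset_of_nonneg (Finset.filter_subset _ _) ?_
          intro j' _ _; exact Finset.sum_nonneg fun i _ => hw _ _ _
      _ ≤ W := by
          refine Finset.sum_le_sum fun j' _ => Finset.sum_le_sum fun i _ => ?_
          exact Finset.single_le_sum (fun l _ => hw j' i l) (Finset.mem_univ j)
  intro n
  induction n with
  | zero =>
    intro Y hY j hj i
    have hjv := j.isLt
    have hjL : (j : ℕ) = s - 1 := by omega
    have hT0 : (∑ j' ∈ Finset.univ.filter (fun j' => j < j'), ∑ i, Y j' i * w j' i j) = 0 := by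
      refine Finset.sum_eq_zero fun j' hj' => ?_
      exfalso
      have h1 : (j : ℕ) < (j' : ℕ) := (Finset.mem_filter.mp hj').2
      have := j'.isLt
      omega
    have hsum := hY.2 j
    rw [if_pos hjL, hT0, add_zero] at hsum
    have h1 : Y j i ≤ ∑ i', Y j i' :=
      Finset.single_le_sum (fun i' _ => hY.1 j i') (Finset.mem_univ i)
    rw [hsum] at h1
    simpa using h1
  | succ n ih =>
    intro Y hY j hj i
    have h1 : Y j i ≤ ∑ i', Y j i' :=
      Finset.single_le_sum (fun i' _ => hY.1 j i') (Finset.mem_univ i)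
    have hT : (∑ j' ∈ Finset.univ.filter (fun j' => j < j'), ∑ i', Y j' i' * w j' i' j)
        ≤ (1 + W) ^ n * W := by
      calc (∑ j' ∈ Finset.univ.filter (fun j' => j < j'), ∑ i', Y j' i' * w j' i' j)
          ≤ ∑ j' ∈ Finset.univ.filter (fun j' => j < j'), ∑ i', (1 + W) ^ n * w j' i' j := by
            refine Finset.sum_le_sum fun j' hj' => Finset.sum_le_sum fun i' _ => ?_
            have hlt : (j : ℕ) < (j' : ℕ) := (Finset.mem_filter.mp hj').2
            have := j'.isLt
            exact mul_le_mul_of_nonneg_right (ih Y hY j' (by omega) i') (hw _ _ _)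
        _ = (1 + W) ^ n * ∑ j' ∈ Finset.univ.filter (fun j' => j < j'), ∑ i', w j' i' j := by
            rw [Finset.mul_sum]
            exact Finset.sum_congr rfl fun j' _ => by rw [Finset.mul_sum]
        _ ≤ (1 + W) ^ n * W := by
            exact mul_le_mul_of_nonneg_left (hWpart j) (by positivity)
    have hsum := hY.2 j
    have hδ : (if (j:ℕ) = s - 1 then (1:ℝ) else 0) ≤ 1 := by split <;> norm_num
    have hstep : Y j i ≤ 1 + (1 + W) ^ n * W := by
      rw [hsum] at h1; linarith
    have : (1:ℝ) + (1 + W) ^ n * W ≤ (1 + W) ^ (n + 1) := by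
      have := hpow n
      have hexp : ((1:ℝ) + W) ^ (n+1) = (1 + W) ^ n + (1 + W) ^ n * W := by ring
      rw [hexp]; linarith
    linarith

end Main

/-- if the support function of a nonempty polytope `P` is computed by a
monotone rank-2 maxout network of size `s`, then `xc P ≤ 2 s`, i.e. `xc P ≤ 2 · mnnc P`. -/
theorem xc_le_two_mnnc {d s : ℕ} (P : Set (Fin d → ℝ)) (hP : IsPolytope P)
    (hf : IsMonotoneMaxoutNetwork 2 s (suppFn P)) :
    xc P ≤ 2 * s := by
  classical
  obtain ⟨a, w, _ha, hw, z, hs, hz, hzf⟩ := hf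
  obtain ⟨V, hVne, hPV⟩ := hP
  have hPcompact : IsCompact P := hPV ▸ V.finite_toSet.isCompact_convexHull (𝕜 := ℝ)
  have hPconv : Convex ℝ P := hPV ▸ convex_convexHull ℝ _
  have hPne : P.Nonempty := by
    obtain ⟨v, hv⟩ := hVne
    exact ⟨v, hPV ▸ subset_convexHull ℝ _ hv⟩
  have hlin : ∀ c : Fin d → ℝ, Continuous fun x : Fin d → ℝ => ∑ m, c m * x m :=
    fun c => continuous_finset_sum _ fun m _ => continuous_const.mul (continuous_apply m)
  have himgc : ∀ c : Fin d → ℝ, IsCompact ((fun x => ∑ m, c m * x m) '' P) :=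
    fun c => hPcompact.image (hlin c)
  have hsupp_le : ∀ c, ∀ x ∈ P, (∑ m, c m * x m) ≤ suppFn P c := by
    intro c x hx
    exact le_csSup (himgc c).bddAbove ⟨x, hx, rfl⟩
  have hsupp_mem : ∀ c, ∃ u ∈ P, suppFn P c = ∑ m, c m * u m := by
    intro c
    obtain ⟨u, hu, he⟩ := (himgc c).sSup_mem (hPne.image _)
    exact ⟨u, hu, he.symm⟩
  have hsz : ∀ c, suppFn P c = z ⟨s - 1, Nat.sub_lt hs Nat.one_pos⟩ c := fun c =>
    congrFun hzf c
  have hub : ∀ (c : Fin d → ℝ) (j : Fin s) (i : Fin 2), (∑ m, a j i m * c m) ≤ z j c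
      - ∑ l ∈ Finset.univ.filter (fun l => l < j), w j i l * z l c := by
    intro c j i
    have := (hz j c).2 ⟨i, rfl⟩
    simp only [] at this
    linarith
  -- direction 1 : the image of the dual feasible set is inside P
  have hSP : ∀ Y ∈ Sset w, rhoMap a Y ∈ P := by
    intro Y hY
    refine mem_of_forall_exists_le hPconv hPcompact.isClosed _ fun c => ?_
    obtain ⟨u, huP, hu⟩ := hsupp_mem c
    refine ⟨u, huP, ?_⟩
    rw [rho_inner, ← hu, hsz c, ← tele hs Y w (fun l => z l c) hY.2]
    refine Finset.sum_le_sum fun j _ => Finset.sum_le_sum fun i _ => ?_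
    exact mul_le_mul_of_nonneg_left (hub c j i) (hY.1 j i)
  -- greedy construction
  have hmem : ∀ (c : Fin d → ℝ) (j : Fin s), ∃ i : Fin 2,
      (∑ m, a j i m * c m) + ∑ l ∈ Finset.univ.filter (fun l => l < j), w j i l * z l c
        = z j c := fun c j => (hz j c).1
  choose I hI using hmem
  set Yg : (Fin d → ℝ) → Fin s → Fin 2 → ℝ := fun c j i =>
    if i = I c j then muAux s (fun j' j'' => w j' (I c j') j'') j else 0 with hYg
  have hYgS : ∀ c, Yg c ∈ Sset w := by
    intro c
    constructor
    · intro j i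
      simp only [hYg]
      split
      · exact muAux_nonneg _ _ (fun p q => hw _ _ _) j
      · exact le_rfl
    · intro j
      have hsum : ∑ i, Yg c j i = muAux s (fun j' j'' => w j' (I c j') j'') j := by
        simp [hYg, Finset.sum_ite_eq']
      have hT : ∀ j' ∈ Finset.univ.filter (fun j' => j < j'),
          (∑ i, Yg c j' i * w j' i j)
            = muAux s (fun j' j'' => w j' (I c j') j'') j' * w j' (I c j') j := by
        intro j' _
        simp [hYg, ite_mul, Finset.sum_ite_eq']
      rw [hsum, Finset.sum_congr rfl hT]
      exact muAux_eq s _ j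
  have hYgval : ∀ c, ∑ m, c m * rhoMap a (Yg c) m = suppFn P c := by
    intro c
    rw [rho_inner, hsz c, ← tele hs (Yg c) w (fun l => z l c) (hYgS c).2]
    refine Finset.sum_congr rfl fun j _ => Finset.sum_congr rfl fun i _ => ?_
    by_cases hi : i = I c j
    · subst hi
      congr 1
      have := hI c j
      linarith
    · have h0 : Yg c j i = 0 := by simp [hYg, hi]
      rw [h0, zero_mul, zero_mul]
  -- compactness of the dual feasible set
  have hScomp : IsCompact (Sset w) := by
    refine IsCompact.of_isClosed_subset (isCompact_Icc
      (a := (0 : Fin s → Fin 2 → ℝ))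
      (b := fun _ _ => (1 + ∑ j', ∑ i', ∑ l, w j' i' l) ^ s)) (Sset_closed w) ?_
    intro Y hY
    rw [Set.mem_Icc]
    constructor
    · refine Pi.le_def.mpr fun j => Pi.le_def.mpr fun i => ?_
      simpa using hY.1 j i
    · refine Pi.le_def.mpr fun j => Pi.le_def.mpr fun i => ?_
      exact Sset_bound w hw s Y hY j (by omega) i
  -- the image equals P
  have himg : rhoMap a '' Sset w = P := by
    apply Set.Subset.antisymm
    · rintro x ⟨Y, hY, rfl⟩
      exact hSP Y hY
    · intro x hx
      refine mem_of_forall_exists_le ((Sset_convex w).linear_image (rhoMap a))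
        ((hScomp.image (rhoMap a).continuous_of_finiteDimensional).isClosed) _ fun c => ?_
      refine ⟨rhoMap a (Yg c), Set.mem_image_of_mem _ (hYgS c), ?_⟩
      rw [hYgval c]
      exact hsupp_le c x hx
  -- build the extended formulation
  refine Nat.sInf_le ?_
  show HasExtFormOfSize P (2 * s)
  set Eqv : Fin s × Fin 2 ≃ Fin (2 * s) := finProdFinEquiv.trans (finCongr (Nat.mul_comm s 2))
    with hEqv
  set Llin : (Fin (2 * s) → ℝ) →ₗ[ℝ] (Fin s → Fin 2 → ℝ) :=
    { toFun := fun y j i => y (Eqv (j, i)),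
      map_add' := fun _ _ => rfl,
      map_smul' := fun _ _ => rfl } with hLlin
  have hLapp : ∀ (y : Fin (2 * s) → ℝ) (j : Fin s) (i : Fin 2),
      Llin y j i = y (Eqv (j, i)) := fun _ _ _ => rfl
  have hLsurj : Function.Surjective Llin := by
    intro Y
    refine ⟨fun r => Y (Eqv.symm r).1 (Eqv.symm r).2, ?_⟩
    funext j i
    rw [hLapp]
    simp
  set Cmat : Matrix (Fin s) (Fin (2 * s)) ℝ := Matrix.of fun j r =>
    (if (Eqv.symm r).1 = j then (1 : ℝ) else 0)
      - (if j < (Eqv.symm r).1 then w (Eqv.symm r).1 (Eqv.symm r).2 j else 0) with hCmat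
  refine ⟨2 * s, s, -1, 0, Cmat, (fun j : Fin s => if (j : ℕ) = s - 1 then (1:ℝ) else 0),
    ((rhoMap a).comp Llin).toAffineMap, ?_⟩
  have hset : {y : Fin (2 * s) → ℝ |
        (-1 : Matrix (Fin (2 * s)) (Fin (2 * s)) ℝ).mulVec y ≤ 0 ∧
        Cmat.mulVec y = (fun j : Fin s => if (j : ℕ) = s - 1 then (1:ℝ) else 0)}
      = Llin ⁻¹' (Sset w) := by
    ext y
    simp only [Set.mem_setOf_eq, Set.mem_preimage]
    have hneg : (-1 : Matrix (Fin (2 * s)) (Fin (2 * s)) ℝ).mulVec y = -y := by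
      rw [Matrix.neg_mulVec, Matrix.one_mulVec]
    have hpos : ((-1 : Matrix (Fin (2 * s)) (Fin (2 * s)) ℝ).mulVec y ≤ 0)
        ↔ (∀ (j : Fin s) (i : Fin 2), 0 ≤ Llin y j i) := by
      rw [hneg]
      constructor
      · intro h j i
        have := h (Eqv (j, i))
        rw [hLapp]
        simpa using this
      · intro h r
        have := h (Eqv.symm r).1 (Eqv.symm r).2
        rw [hLapp] at this
        simp only [Prod.mk.eta, Equiv.apply_symm_apply] at this
        simpa using this
    have hrow : ∀ j : Fin s, Cmat.mulVec y j
        = (∑ i, Llin y j i)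
          - ∑ j' ∈ Finset.univ.filter (fun j' => j < j'), ∑ i, Llin y j' i * w j' i j := by
      intro j
      have h0 : Cmat.mulVec y j = ∑ p : Fin s × Fin 2, Cmat j (Eqv p) * y (Eqv p) := by
        rw [Equiv.sum_comp Eqv (fun r => Cmat j r * y r)]
        rfl
      rw [h0, Fintype.sum_prod_type]
      have hterm : ∀ (j' : Fin s) (i : Fin 2), Cmat j (Eqv (j', i)) * y (Eqv (j', i))
          = (if j' = j then Llin y j' i else 0)
            - (if j < j' then Llin y j' i * w j' i j else 0) := by
        intro j' i
        rw [hLapp]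
        simp only [hCmat, Matrix.of_apply, Equiv.symm_apply_apply]
        by_cases h1 : j' = j <;> by_cases h2 : j < j' <;> simp [h1, h2] <;> ring
      simp only [hterm, Finset.sum_sub_distrib]
      congr 1
      · rw [Finset.sum_comm]
        simp [Finset.sum_ite_eq']
      · rw [Finset.sum_filter]
        refine Finset.sum_congr rfl fun j' _ => ?_
        by_cases hc : j < j' <;> simp [hc]
    constructor
    · rintro ⟨h1, h2⟩
      refine ⟨hpos.mp h1, fun j => ?_⟩
      have := congrFun h2 j
      rw [hrow j, sub_eq_iff_eq_add] at this
      exact this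
    · rintro ⟨h1, h2⟩
      refine ⟨hpos.mpr h1, ?_⟩
      funext j
      rw [hrow j, h2 j]
      ring
  rw [hset]
  have hcoe : ⇑((rhoMap a).comp Llin).toAffineMap = (rhoMap a) ∘ Llin := rfl
  rw [hcoe, Set.image_comp, Set.image_preimage_eq _ hLsurj, himg]
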